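/- Let f ∈ C⁶([a,b]), n ≥ 1, h = (b-a)/(2n), x_j = a + jh for j = 0,…,2n. Then the composite corrected Simpson approximation (h/15)·Σ_{j odd, 1≤j≤2n-1} [7f(x_{j-1}) + 16f(x_j) + 7f(x_{j+1})] - (h²/15)[f'(b) - f'(a)] differs from ∫_a^b f(x) dx by at most (1/2)·(2⁷/604800)·h⁶·(b-a)·‖f⁽⁶⁾‖_∞, where ‖f⁽⁶⁾‖_∞ = sup_{[a,b]} |f⁽⁶⁾|. -/

import Mathlib

open Set intervalIntegral MeasureTheory

private lemma kernel_identity {H : ℝ} (hH : 0 < H) (g : ℕ → ℝ → ℝ) (N : ℕ)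
    (hderiv : ∀ k < N, ∀ u ∈ Icc (0:ℝ) H, HasDerivWithinAt (g k) (g (k+1) u) (Icc 0 H) u)
    (hcont : ContinuousOn (g N) (Icc 0 H)) :
    ∀ k ≤ N, (∫ t in (0:ℝ)..H, (H - t)^k / (k.factorial : ℝ) * g k t)
      = (∫ t in (0:ℝ)..H, g 0 t)
        - ∑ j ∈ Finset.range k, g j 0 * H^(j+1) / ((j+1).factorial : ℝ) := by
  have hco : ∀ k ≤ N, ContinuousOn (g k) (Icc 0 H) := by
    intro k hk
    rcases eq_or_lt_of_le hk with rfl | hk'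
    · exact hcont
    · exact fun u hu => (hderiv k hk' u hu).continuousWithinAt
  intro k
  induction k with
  | zero =>
    intro _
    simp
  | succ k ih =>
    intro hk1
    have hkN : k < N := hk1
    have ihk := ih hkN.le
    have hint1 : IntervalIntegrable (fun t => (H - t)^k / (k.factorial : ℝ) * g k t)
        volume 0 H := by
      apply ContinuousOn.intervalIntegrable
      rw [uIcc_of_le hH.le]
      exact (((continuous_const.sub continuous_id).pow k).continuousOn.div_const _).mul
        (hco k hkN.le)
    have hint2 : IntervalIntegrable (fun t => (H - t)^(k+1) / ((k+1).factorial : ℝ) * g (k+1) t)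
        volume 0 H := by
      apply ContinuousOn.intervalIntegrable
      rw [uIcc_of_le hH.le]
      exact (((continuous_const.sub continuous_id).pow (k+1)).continuousOn.div_const _).mul
        (hco (k+1) hk1)
    have hftc : (∫ t in (0:ℝ)..H,
          ((H - t)^(k+1) / ((k+1).factorial : ℝ) * g (k+1) t
            - (H - t)^k / (k.factorial : ℝ) * g k t))
        = (fun t => (H - t)^(k+1) / ((k+1).factorial : ℝ) * g k t) H
          - (fun t => (H - t)^(k+1) / ((k+1).factorial : ℝ) * g k t) 0 := by
      refine integral_eq_sub_of_hasDeriv_right_of_le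
        (f := fun t => (H - t)^(k+1) / ((k+1).factorial : ℝ) * g k t)
        (f' := fun t => (H - t)^(k+1) / ((k+1).factorial : ℝ) * g (k+1) t
            - (H - t)^k / (k.factorial : ℝ) * g k t)
        hH.le ?_ ?_ ?_
      · exact (((continuous_const.sub continuous_id).pow (k+1)).continuousOn.div_const _).mul
          (hco k hkN.le)
      · intro x hx
        have hxI : x ∈ Icc (0:ℝ) H := ⟨hx.1.le, hx.2.le⟩
        have hd1 : HasDerivAt (fun t : ℝ => (H - t)^(k+1) / ((k+1).factorial : ℝ))
            (((k+1 : ℕ) * (H - x)^k * (-1)) / ((k+1).factorial : ℝ)) x :=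
          (((hasDerivAt_id x).const_sub H).pow (k+1)).div_const _
        have hd2 : HasDerivWithinAt (g k) (g (k+1) x) (Icc 0 H) x := hderiv k hkN x hxI
        have hall := (hd1.hasDerivWithinAt.mul hd2).hasDerivAt (Icc_mem_nhds hx.1 hx.2)
        have : ((k+1 : ℕ) * (H - x)^k * (-1)) / ((k+1).factorial : ℝ) * g k x
            + (H - x)^(k+1) / ((k+1).factorial : ℝ) * g (k+1) x
            = (H - x)^(k+1) / ((k+1).factorial : ℝ) * g (k+1) x
              - (H - x)^k / (k.factorial : ℝ) * g k x := by
          have hfac : ((k+1).factorial : ℝ) = ((k:ℝ)+1) * (k.factorial : ℝ) := by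
            rw [Nat.factorial_succ]; push_cast; ring
          have hfacpos : (0:ℝ) < (k.factorial : ℝ) := by positivity
          rw [hfac]
          field_simp
          push_cast
          ring
        rw [this] at hall
        exact hall.hasDerivWithinAt
      · exact hint2.sub hint1
    rw [intervalIntegral.integral_sub hint2 hint1] at hftc
    simp only [sub_self, sub_zero, zero_pow (Nat.succ_ne_zero k), zero_div, zero_mul,
      zero_sub] at hftc
    rw [Finset.sum_range_succ]
    have key : (∫ t in (0:ℝ)..H, (H - t)^(k+1) / ((k+1).factorial : ℝ) * g (k+1) t)
        = (∫ t in (0:ℝ)..H, (H - t)^k / (k.factorial : ℝ) * g k t)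
          - g k 0 * H^(k+1) / ((k+1).factorial : ℝ) := by
      rw [sub_eq_iff_eq_add] at hftc
      rw [hftc]; ring
    rw [key, ihk]
    ring

private lemma ftc_simple {H : ℝ} (hH : 0 < H) (g g' : ℝ → ℝ)
    (hd : ∀ u ∈ Icc (0:ℝ) H, HasDerivWithinAt g (g' u) (Icc 0 H) u)
    (hc : ContinuousOn g' (Icc 0 H)) :
    ∫ t in (0:ℝ)..H, g' t = g H - g 0 := by
  refine integral_eq_sub_of_hasDeriv_right_of_le hH.le
    (fun u hu => (hd u hu).continuousWithinAt) ?_ ?_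
  · intro x hx
    exact ((hd x ⟨hx.1.le, hx.2.le⟩).hasDerivAt (Icc_mem_nhds hx.1 hx.2)).hasDerivWithinAt
  · exact ContinuousOn.intervalIntegrable (by rwa [uIcc_of_le hH.le])

set_option maxHeartbeats 2000000 in
private lemma panel_bound (f : ℝ → ℝ) (a b : ℝ) (hab : a < b)
    (hf : ContDiffOn ℝ 6 f (Set.Icc a b)) (M : ℝ)
    (hM : ∀ x ∈ Set.Icc a b, |iteratedDerivWithin 6 f (Set.Icc a b) x| ≤ M)
    (c h : ℝ) (hh : 0 < h) (hc1 : a ≤ c - h) (hc2 : c + h ≤ b) :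
    |(∫ x in (c-h)..(c+h), f x)
        - ((h/15) * (7 * f (c-h) + 16 * f c + 7 * f (c+h))
          - (h^2/15) * (derivWithin f (Set.Icc a b) (c+h)
              - derivWithin f (Set.Icc a b) (c-h)))|
      ≤ h^7 / 4725 * M := by
  have uds : UniqueDiffOn ℝ (Set.Icc a b) := uniqueDiffOn_Icc hab
  set fd : ℕ → ℝ → ℝ := fun k => iteratedDerivWithin k f (Set.Icc a b) with hfd
  set F : ℕ → ℝ → ℝ := fun k u => fd k (c+u) + (-1:ℝ)^k * fd k (c-u) with hF
  have hmem1 : ∀ u ∈ Icc (0:ℝ) h, c + u ∈ Set.Icc a b := by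
    intro u hu
    exact ⟨by linarith [hu.1], by linarith [hu.2]⟩
  have hmem2 : ∀ u ∈ Icc (0:ℝ) h, c - u ∈ Set.Icc a b := by
    intro u hu
    exact ⟨by linarith [hu.2], by linarith [hu.1]⟩
  have hfds : ∀ k : ℕ, k < 6 → ∀ x ∈ Set.Icc a b,
      HasDerivWithinAt (fd k) (fd (k+1) x) (Set.Icc a b) x := by
    intro k hk x hx
    have hdiff : DifferentiableWithinAt ℝ (fd k) (Set.Icc a b) x :=
      (hf.differentiableOn_iteratedDerivWithin (by exact_mod_cast hk) uds) x hx
    have h2 := hdiff.hasDerivWithinAt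
    rw [hfd]
    simp only []
    rw [iteratedDerivWithin_succ]
    exact h2
  have hFd : ∀ k : ℕ, k < 6 → ∀ u ∈ Icc (0:ℝ) h,
      HasDerivWithinAt (F k) (F (k+1) u) (Icc 0 h) u := by
    intro k hk u hu
    have h1 : HasDerivWithinAt (fun v => fd k (c + v)) (fd (k+1) (c+u) * 1) (Icc 0 h) u :=
      HasDerivWithinAt.comp u (hfds k hk _ (hmem1 u hu))
        (((hasDerivAt_id u).const_add c).hasDerivWithinAt) hmem1
    have h2 : HasDerivWithinAt (fun v => fd k (c - v)) (fd (k+1) (c-u) * (-1)) (Icc 0 h) u :=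
      HasDerivWithinAt.comp u (hfds k hk _ (hmem2 u hu))
        (((hasDerivAt_id u).const_sub c).hasDerivWithinAt) hmem2
    have h3 := h1.add (h2.const_mul ((-1:ℝ)^k))
    convert h3 using 1
    · rfl
    · rfl
    · rfl
    rw [hF]
    simp only [pow_succ]
    ring
  have hFc : ∀ k : ℕ, k ≤ 6 → ContinuousOn (F k) (Icc 0 h) := by
    intro k hk
    have h0 : ContinuousOn (fd k) (Set.Icc a b) :=
      hf.continuousOn_iteratedDerivWithin (by exact_mod_cast hk) uds
    exact (h0.comp ((continuous_const.add continuous_id).continuousOn) hmem1).add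
      (continuousOn_const.mul (h0.comp ((continuous_const.sub continuous_id).continuousOn) hmem2))
  have hodd1 : F 1 0 = 0 := by rw [hF]; norm_num
  have hodd3 : F 3 0 = 0 := by rw [hF]; norm_num
  have hodd5 : F 5 0 = 0 := by rw [hF]; norm_num
  -- kernel identities
  have KIA := kernel_identity hh F 6 (fun k hk => hFd k hk) (hFc 6 le_rfl) 6 le_rfl
  have KIB := kernel_identity hh (fun k => F (k+1)) 5
    (fun k hk u hu => hFd (k+1) (by omega) u hu) (hFc 6 le_rfl) 5 le_rfl
  have KIC := kernel_identity hh (fun k => F (k+2)) 4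
    (fun k hk u hu => hFd (k+2) (by omega) u hu) (hFc 6 le_rfl) 4 le_rfl
  have hB0 : (∫ t in (0:ℝ)..h, F 1 t) = F 0 h - F 0 0 :=
    ftc_simple hh (F 0) (F 1) (hFd 0 (by norm_num)) (hFc 1 (by norm_num))
  have hC0 : (∫ t in (0:ℝ)..h, F 2 t) = F 1 h - F 1 0 :=
    ftc_simple hh (F 1) (F 2) (hFd 1 (by norm_num)) (hFc 2 (by norm_num))
  simp only [Finset.sum_range_succ, Finset.sum_range_zero] at KIA KIB KIC
  norm_num [Nat.factorial] at KIA KIB KIC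
  rw [hodd1, hodd3, hodd5] at KIA
  rw [hodd1] at hC0
  rw [hodd3, hodd5] at KIB
  rw [hodd3, hodd5] at KIC
  rw [hodd1] at KIB
  have hsub1 : Icc (c-h) c ⊆ Set.Icc a b := Icc_subset_Icc hc1 (by linarith)
  have hsub2 : Icc c (c+h) ⊆ Set.Icc a b := Icc_subset_Icc (by linarith) hc2
  have int1 : IntervalIntegrable f volume (c-h) c := by
    apply ContinuousOn.intervalIntegrable
    rw [uIcc_of_le (by linarith : c - h ≤ c)]
    exact hf.continuousOn.mono hsub1
  have int2 : IntervalIntegrable f volume c (c+h) := by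
    apply ContinuousOn.intervalIntegrable
    rw [uIcc_of_le (by linarith : c ≤ c + h)]
    exact hf.continuousOn.mono hsub2
  have intA : IntervalIntegrable (fun t => f (c + t)) volume 0 h := by
    apply ContinuousOn.intervalIntegrable
    rw [uIcc_of_le hh.le]
    exact hf.continuousOn.comp ((continuous_const.add continuous_id).continuousOn) hmem1
  have intB : IntervalIntegrable (fun t => f (c - t)) volume 0 h := by
    apply ContinuousOn.intervalIntegrable
    rw [uIcc_of_le hh.le]
    exact hf.continuousOn.comp ((continuous_const.sub continuous_id).continuousOn) hmem2
  have hsplit : (∫ x in (c-h)..(c+h), f x) = ∫ t in (0:ℝ)..h, F 0 t := by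
    have e1 : (∫ x in (c-h)..c, f x) + (∫ x in c..(c+h), f x)
        = ∫ x in (c-h)..(c+h), f x :=
      intervalIntegral.integral_add_adjacent_intervals int1 int2
    have e2 : (∫ t in (0:ℝ)..h, f (c + t)) = ∫ x in c..(c+h), f x := by
      rw [intervalIntegral.integral_comp_add_left f c]
      norm_num
    have e3 : (∫ t in (0:ℝ)..h, f (c - t)) = ∫ x in (c-h)..c, f x := by
      rw [intervalIntegral.integral_comp_sub_left f c]
      norm_num
    have e4 : (∫ t in (0:ℝ)..h, F 0 t)
        = (∫ t in (0:ℝ)..h, f (c + t)) + ∫ t in (0:ℝ)..h, f (c - t) := by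
      rw [← intervalIntegral.integral_add intA intB]
      apply intervalIntegral.integral_congr
      intro t ht
      simp [hF, hfd]
    rw [e4, e2, e3]
    linarith [e1]
  have hc1' : c - h ∈ Set.Icc a b := ⟨hc1, by linarith⟩
  have hc2' : c + h ∈ Set.Icc a b := ⟨by linarith, hc2⟩
  have hrule1 : 7 * f (c-h) + 16 * f c + 7 * f (c+h) = 7 * F 0 h + 8 * F 0 0 := by
    simp only [hF, hfd, iteratedDerivWithin_zero, pow_zero, one_mul, add_zero, sub_zero]
    ring
  have hrule2 : derivWithin f (Set.Icc a b) (c+h) - derivWithin f (Set.Icc a b) (c-h)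
      = F 1 h := by
    simp only [hF, hfd]
    rw [iteratedDerivWithin_one]
    ring
  have hmain : (∫ x in (c-h)..(c+h), f x)
      - ((h/15) * (7 * f (c-h) + 16 * f c + 7 * f (c+h))
        - (h^2/15) * (derivWithin f (Set.Icc a b) (c+h)
            - derivWithin f (Set.Icc a b) (c-h)))
      = (∫ t in (0:ℝ)..h, (h - t)^6 / 720 * F 6 t)
        - 7*h/15 * (∫ t in (0:ℝ)..h, (h - t)^5 / 120 * F 6 t)
        + h^2/15 * (∫ t in (0:ℝ)..h, (h - t)^4 / 24 * F 6 t) := by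
    rw [hsplit, hrule1, hrule2]
    linear_combination -KIA + (7*h/15) * KIB - (h^2/15) * KIC
      + (7*h/15) * hB0 - (h^2/15) * hC0
  rw [hmain]
  have i6 : IntervalIntegrable (fun t => (h - t)^6/720 * F 6 t) volume 0 h := by
    apply ContinuousOn.intervalIntegrable; rw [uIcc_of_le hh.le]
    exact (((continuous_const.sub continuous_id).pow 6).continuousOn.div_const _).mul
      (hFc 6 le_rfl)
  have i5 : IntervalIntegrable (fun t => (h - t)^5/120 * F 6 t) volume 0 h := by
    apply ContinuousOn.intervalIntegrable; rw [uIcc_of_le hh.le]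
    exact (((continuous_const.sub continuous_id).pow 5).continuousOn.div_const _).mul
      (hFc 6 le_rfl)
  have i4 : IntervalIntegrable (fun t => (h - t)^4/24 * F 6 t) volume 0 h := by
    apply ContinuousOn.intervalIntegrable; rw [uIcc_of_le hh.le]
    exact (((continuous_const.sub continuous_id).pow 4).continuousOn.div_const _).mul
      (hFc 6 le_rfl)
  have hcomb : (∫ t in (0:ℝ)..h, (h - t)^6/720 * F 6 t)
      - 7*h/15 * (∫ t in (0:ℝ)..h, (h - t)^5/120 * F 6 t)
      + h^2/15 * (∫ t in (0:ℝ)..h, (h - t)^4/24 * F 6 t)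
      = ∫ t in (0:ℝ)..h,
          ((h-t)^6/720 - 7*h/15*((h-t)^5/120) + h^2/15*((h-t)^4/24)) * F 6 t := by
    rw [← intervalIntegral.integral_const_mul (7*h/15),
      ← intervalIntegral.integral_const_mul (h^2/15),
      ← intervalIntegral.integral_sub i6 (i5.const_mul _),
      ← intervalIntegral.integral_add ((i6.sub (i5.const_mul _))) (i4.const_mul _)]
    apply intervalIntegral.integral_congr
    intro t ht
    ring
  rw [hcomb]
  have hM0 : 0 ≤ M := (abs_nonneg _).trans (hM a ⟨le_refl a, hab.le⟩)
  have hKpos : ∀ t ∈ Icc (0:ℝ) h,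
      0 ≤ (h-t)^6/720 - 7*h/15*((h-t)^5/120) + h^2/15*((h-t)^4/24) := by
    intro t ht
    have hs0 : 0 ≤ h - t := by linarith [ht.2]
    have ht0 : 0 ≤ t := ht.1
    have key : (h-t)^6/720 - 7*h/15*((h-t)^5/120) + h^2/15*((h-t)^4/24)
        = ((h-t)^4 * (5*t^2 + 4*h*t + h^2))/3600 := by ring
    rw [key]
    have h1 : 0 ≤ 5*t^2 + 4*h*t + h^2 := by
      have := mul_nonneg hh.le ht0
      nlinarith [sq_nonneg t, sq_nonneg h]
    have h2 : 0 ≤ (h-t)^4 := pow_nonneg hs0 4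
    positivity
  have hF6b : ∀ t ∈ Icc (0:ℝ) h, |F 6 t| ≤ 2 * M := by
    intro t ht
    simp only [hF]
    calc |fd 6 (c+t) + (-1:ℝ)^6 * fd 6 (c-t)|
        ≤ |fd 6 (c+t)| + |fd 6 (c-t)| := by
          norm_num
          exact abs_add_le _ _
      _ ≤ M + M := add_le_add (hM _ (hmem1 t ht)) (hM _ (hmem2 t ht))
      _ = 2*M := by ring
  have intK : IntervalIntegrable (fun t =>
      ((h-t)^6/720 - 7*h/15*((h-t)^5/120) + h^2/15*((h-t)^4/24)) * F 6 t) volume 0 h := by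
    apply ContinuousOn.intervalIntegrable; rw [uIcc_of_le hh.le]
    apply ContinuousOn.mul _ (hFc 6 le_rfl)
    apply Continuous.continuousOn
    fun_prop
  have intKM : IntervalIntegrable (fun t =>
      ((h-t)^6/720 - 7*h/15*((h-t)^5/120) + h^2/15*((h-t)^4/24)) * (2*M)) volume 0 h := by
    apply ContinuousOn.intervalIntegrable; rw [uIcc_of_le hh.le]
    apply Continuous.continuousOn
    fun_prop
  have hpowint : ∀ k : ℕ, (∫ t in (0:ℝ)..h, (h - t)^k) = h^(k+1)/((k:ℝ)+1) := by
    intro k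
    have e := intervalIntegral.integral_comp_sub_left (a := (0:ℝ)) (b := h)
      (fun y : ℝ => y^k) h
    simp only [sub_zero, sub_self] at e
    rw [e, integral_pow]
    push_cast
    ring
  calc |∫ t in (0:ℝ)..h,
        ((h-t)^6/720 - 7*h/15*((h-t)^5/120) + h^2/15*((h-t)^4/24)) * F 6 t|
      ≤ ∫ t in (0:ℝ)..h,
          |((h-t)^6/720 - 7*h/15*((h-t)^5/120) + h^2/15*((h-t)^4/24)) * F 6 t| :=
        intervalIntegral.abs_integral_le_integral_abs hh.le
    _ ≤ ∫ t in (0:ℝ)..h,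
          ((h-t)^6/720 - 7*h/15*((h-t)^5/120) + h^2/15*((h-t)^4/24)) * (2*M) := by
        apply intervalIntegral.integral_mono_on hh.le intK.abs intKM
        intro t ht
        rw [abs_mul, abs_of_nonneg (hKpos t ht)]
        exact mul_le_mul_of_nonneg_left (hF6b t ht) (hKpos t ht)
    _ = h^7/4725 * M := by
        have e : ∀ t:ℝ, ((h-t)^6/720 - 7*h/15*((h-t)^5/120) + h^2/15*((h-t)^4/24)) * (2*M)
            = (2*M/720) * (h-t)^6 - (14*M*h/1800) * (h-t)^5 + (2*M*h^2/360) * (h-t)^4 := by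
          intro t; ring
        simp_rw [e]
        have j6 : IntervalIntegrable (fun t : ℝ => (2*M/720) * (h-t)^6) volume 0 h := by
          apply Continuous.intervalIntegrable; fun_prop
        have j5 : IntervalIntegrable (fun t : ℝ => (14*M*h/1800) * (h-t)^5) volume 0 h := by
          apply Continuous.intervalIntegrable; fun_prop
        have j4 : IntervalIntegrable (fun t : ℝ => (2*M*h^2/360) * (h-t)^4) volume 0 h := by
          apply Continuous.intervalIntegrable; fun_prop
        rw [intervalIntegral.integral_add (j6.sub j5) j4,
          intervalIntegral.integral_sub j6 j5,
          intervalIntegral.integral_const_mul, intervalIntegral.integral_const_mul,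
          intervalIntegral.integral_const_mul, hpowint 6, hpowint 5, hpowint 4]
        norm_num
        ring

set_option maxHeartbeats 2000000 in
theorem composite_corrected_simpson_error (f : ℝ → ℝ) (a b : ℝ) (hab : a < b)
    (n : ℕ) (hn : 1 ≤ n) (h : ℝ) (hh : h = (b - a) / (2 * n))
    (hf : ContDiffOn ℝ 6 f (Set.Icc a b)) :
    |(∫ x in a..b, f x) -
        ((h / 15) * ∑ i ∈ Finset.range n,
            (7 * f (a + (2 * i : ℕ) * h) + 16 * f (a + (2 * i + 1 : ℕ) * h)
              + 7 * f (a + (2 * i + 2 : ℕ) * h))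
          - (h ^ 2 / 15) *
            (derivWithin f (Set.Icc a b) b - derivWithin f (Set.Icc a b) a))|
      ≤ (1 / 2) * (2 ^ 7 / 604800) * h ^ 6 * (b - a) *
          (⨆ x : Set.Icc a b, |iteratedDerivWithin 6 f (Set.Icc a b) x|) := by
  have hba : 0 < b - a := sub_pos.mpr hab
  have hn0 : (0:ℝ) < (n:ℝ) := by exact_mod_cast hn
  have hh0 : 0 < h := by rw [hh]; positivity
  have hba2 : b - a = 2 * n * h := by rw [hh]; field_simp
  have uds : UniqueDiffOn ℝ (Set.Icc a b) := uniqueDiffOn_Icc hab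
  set M := ⨆ x : Set.Icc a b, |iteratedDerivWithin 6 f (Set.Icc a b) x| with hMdef
  have hbdd : BddAbove (Set.range
      fun x : Set.Icc a b => |iteratedDerivWithin 6 f (Set.Icc a b) ↑x|) := by
    have hc : ContinuousOn (fun x => |iteratedDerivWithin 6 f (Set.Icc a b) x|)
        (Set.Icc a b) := (hf.continuousOn_iteratedDerivWithin le_rfl uds).abs
    have himg := (isCompact_Icc.image_of_continuousOn hc).bddAbove
    have heq : Set.range (fun x : Set.Icc a b => |iteratedDerivWithin 6 f (Set.Icc a b) ↑x|)
        = (fun x => |iteratedDerivWithin 6 f (Set.Icc a b) x|) '' (Set.Icc a b) := by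
      rw [show (fun x : Set.Icc a b => |iteratedDerivWithin 6 f (Set.Icc a b) ↑x|)
        = (fun x => |iteratedDerivWithin 6 f (Set.Icc a b) x|) ∘ Subtype.val from rfl,
        Set.range_comp, Subtype.range_coe]
    rw [heq]
    exact himg
  have hM : ∀ x ∈ Set.Icc a b, |iteratedDerivWithin 6 f (Set.Icc a b) x| ≤ M :=
    fun x hx => le_ciSup hbdd (⟨x, hx⟩ : Set.Icc a b)
  set p : ℕ → ℝ := fun i => a + 2*(i:ℝ)*h with hp
  have hple : ∀ i : ℕ, p i ≤ p (i+1) := by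
    intro i
    rw [hp]
    simp only []
    push_cast
    nlinarith [hh0]
  have hmemp : ∀ i : ℕ, i ≤ n → p i ∈ Set.Icc a b := by
    intro i hi
    have hi' : (i:ℝ) ≤ (n:ℝ) := by exact_mod_cast hi
    rw [hp]
    constructor
    · simp only []
      nlinarith [hh0, Nat.cast_nonneg (α := ℝ) i]
    · simp only []
      nlinarith [hh0]
  have hint : ∀ k : ℕ, k < n → IntervalIntegrable f volume (p k) (p (k+1)) := by
    intro k hk
    apply ContinuousOn.intervalIntegrable
    rw [uIcc_of_le (hple k)]
    exact hf.continuousOn.mono (Set.Icc_subset_Icc (hmemp k hk.le).1 (hmemp (k+1) hk).2)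
  have hsum : (∫ x in a..b, f x) = ∑ i ∈ Finset.range n, ∫ x in (p i)..(p (i+1)), f x := by
    rw [intervalIntegral.sum_integral_adjacent_intervals hint]
    have h0 : p 0 = a := by rw [hp]; simp
    have hnn : p n = b := by rw [hp]; simp only []; linarith [hba2]
    rw [h0, hnn]
  have htel : derivWithin f (Set.Icc a b) b - derivWithin f (Set.Icc a b) a
      = ∑ i ∈ Finset.range n,
          (derivWithin f (Set.Icc a b) (p (i+1)) - derivWithin f (Set.Icc a b) (p i)) := by
    rw [Finset.sum_range_sub (fun i => derivWithin f (Set.Icc a b) (p i))]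
    have h0 : p 0 = a := by rw [hp]; simp
    have hnn : p n = b := by rw [hp]; simp only []; linarith [hba2]
    rw [h0, hnn]
  have key : (∫ x in a..b, f x) -
        ((h / 15) * ∑ i ∈ Finset.range n,
            (7 * f (a + (2 * i : ℕ) * h) + 16 * f (a + (2 * i + 1 : ℕ) * h)
              + 7 * f (a + (2 * i + 2 : ℕ) * h))
          - (h ^ 2 / 15) *
            (derivWithin f (Set.Icc a b) b - derivWithin f (Set.Icc a b) a))
      = ∑ i ∈ Finset.range n,
          ((∫ x in ((a + (2*(i:ℝ)+1)*h) - h)..((a + (2*(i:ℝ)+1)*h) + h), f x)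
            - ((h/15) * (7 * f ((a + (2*(i:ℝ)+1)*h) - h) + 16 * f (a + (2*(i:ℝ)+1)*h)
                  + 7 * f ((a + (2*(i:ℝ)+1)*h) + h))
              - (h^2/15) * (derivWithin f (Set.Icc a b) ((a + (2*(i:ℝ)+1)*h) + h)
                  - derivWithin f (Set.Icc a b) ((a + (2*(i:ℝ)+1)*h) - h)))) := by
    rw [hsum, htel, Finset.mul_sum, Finset.mul_sum, ← Finset.sum_sub_distrib,
      ← Finset.sum_sub_distrib]
    apply Finset.sum_congr rfl
    intro i _
    have e1 : (a + (2*(i:ℝ)+1)*h) - h = p i := by rw [hp]; simp only []; ring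
    have e2 : (a + (2*(i:ℝ)+1)*h) + h = p (i+1) := by
      rw [hp]; simp only []; push_cast; ring
    have e3 : a + ((2 * i : ℕ) : ℝ) * h = p i := by rw [hp]; simp only []; push_cast; ring
    have e4 : a + ((2 * i + 1 : ℕ) : ℝ) * h = a + (2*(i:ℝ)+1)*h := by push_cast; ring
    have e5 : a + ((2 * i + 2 : ℕ) : ℝ) * h = p (i+1) := by
      rw [hp]; simp only []; push_cast; ring
    rw [e1, e2, e3, e4, e5]
  rw [key]
  calc |∑ i ∈ Finset.range n,
          ((∫ x in ((a + (2*(i:ℝ)+1)*h) - h)..((a + (2*(i:ℝ)+1)*h) + h), f x)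
            - ((h/15) * (7 * f ((a + (2*(i:ℝ)+1)*h) - h) + 16 * f (a + (2*(i:ℝ)+1)*h)
                  + 7 * f ((a + (2*(i:ℝ)+1)*h) + h))
              - (h^2/15) * (derivWithin f (Set.Icc a b) ((a + (2*(i:ℝ)+1)*h) + h)
                  - derivWithin f (Set.Icc a b) ((a + (2*(i:ℝ)+1)*h) - h))))|
      ≤ ∑ i ∈ Finset.range n,
          |(∫ x in ((a + (2*(i:ℝ)+1)*h) - h)..((a + (2*(i:ℝ)+1)*h) + h), f x)
            - ((h/15) * (7 * f ((a + (2*(i:ℝ)+1)*h) - h) + 16 * f (a + (2*(i:ℝ)+1)*h)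
                  + 7 * f ((a + (2*(i:ℝ)+1)*h) + h))
              - (h^2/15) * (derivWithin f (Set.Icc a b) ((a + (2*(i:ℝ)+1)*h) + h)
                  - derivWithin f (Set.Icc a b) ((a + (2*(i:ℝ)+1)*h) - h)))| :=
      Finset.abs_sum_le_sum_abs _ _
    _ ≤ ∑ i ∈ Finset.range n, h^7/4725 * M := by
        apply Finset.sum_le_sum
        intro i hi
        have hi' : (i:ℝ) + 1 ≤ (n:ℝ) := by exact_mod_cast Finset.mem_range.mp hi
        have hi0 : (0:ℝ) ≤ (i:ℝ) := Nat.cast_nonneg i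
        apply panel_bound f a b hab hf M hM (a + (2*(i:ℝ)+1)*h) h hh0
        · nlinarith [hh0]
        · nlinarith [hh0]
    _ = (1 / 2) * (2 ^ 7 / 604800) * h ^ 6 * (b - a) * M := by
        rw [Finset.sum_const, Finset.card_range, nsmul_eq_mul, hba2]
        ring
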